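/- Let U ⊆ ℝ^m be open, ψ : U → ℝ be C¹, and F(A) = ψ(P₁(A), …, P_m(A)) with F'(A) = Σ_{l=1}^m l·∂_lψ(P₁(A),…,P_m(A))·A^{l−1}. For a symmetric positive definite n×n real matrix g and an arbitrary n×n real matrix h, set Φ(g,h) = F(g⁻¹ · ĥ), where ĥ = (h + hᵀ)/2, defined whenever g⁻¹ĥ lies in the domain of F. Then the partial Fréchet derivative of Φ in the h-variable satisfies, for every n×n real matrix a, (∂Φ/∂h)(g,h)(a) = trace(F'(g⁻¹ĥ) · g⁻¹ · â) = dF(g⁻¹ĥ)(g⁻¹â), where â = (a + aᵀ)/2. In particular (∂Φ/∂h)(g,h)(a) = (∂Φ/∂h)(g,h)(â) is a symmetric bilinear function of the entries of a. -/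

import Mathlib

open Matrix

attribute [local instance] Matrix.normedAddCommGroup Matrix.normedSpace

/-- `P_k(A) = trace (A ^ k)`, bundled as the vector `(P₁(A), …, P_m(A))`. -/
noncomputable def Pvec (n m : ℕ) (A : Matrix (Fin n) (Fin n) ℝ) : Fin m → ℝ :=
  fun l => (A ^ ((l : ℕ) + 1)).trace

/-- `F'(A) = ∑_{l=1}^m l ∂ψ/∂P_l (P₁(A),…,P_m(A)) A^{l-1}`
(the index `l : Fin m` represents the integer `l + 1 ∈ {1, …, m}`). -/
noncomputable def Fprime (n m : ℕ) (ψ : (Fin m → ℝ) → ℝ) (A : Matrix (Fin n) (Fin n) ℝ) :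
    Matrix (Fin n) (Fin n) ℝ :=
  ∑ l : Fin m,
    (((l : ℕ) + 1 : ℝ) * fderiv ℝ ψ (Pvec n m A) (Pi.single l 1)) • A ^ (l : ℕ)

/-- The symmetrisation `â = (a + aᵀ)/2` of a bilinear form/matrix. -/
noncomputable def symmetrise (n : ℕ) (a : Matrix (Fin n) (Fin n) ℝ) :
    Matrix (Fin n) (Fin n) ℝ :=
  ((1 : ℝ) / 2) • (a + aᵀ)

section Aux

variable {n : ℕ}

local notation "M" => Matrix (Fin n) (Fin n) ℝ

/-- left multiplication as a continuous linear map -/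
noncomputable def mulLeftCLM (C : M) : M →L[ℝ] M :=
  (LinearMap.mulLeft ℝ C).toContinuousLinearMap

/-- right multiplication as a continuous linear map -/
noncomputable def mulRightCLM (C : M) : M →L[ℝ] M :=
  (LinearMap.mulRight ℝ C).toContinuousLinearMap

/-- trace as a continuous linear map -/
noncomputable def traceCLM : M →L[ℝ] ℝ :=
  (Matrix.traceLinearMap (Fin n) ℝ ℝ).toContinuousLinearMap

@[simp] lemma mulLeftCLM_apply (C B : M) : mulLeftCLM C B = C * B := rfl
@[simp] lemma mulRightCLM_apply (C B : M) : mulRightCLM C B = B * C := rfl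
@[simp] lemma traceCLM_apply (B : M) : traceCLM B = B.trace := rfl

/-- matrix multiplication as a continuous bilinear map -/
noncomputable def mulCLM2 : M →L[ℝ] M →L[ℝ] M :=
  LinearMap.toContinuousLinearMap
    { toFun := fun X => mulLeftCLM X
      map_add' := by intro x y; ext B; simp [add_mul]
      map_smul' := by intro c x; ext B; simp [Matrix.smul_mul] }

@[simp] lemma mulCLM2_apply (X Y : M) : mulCLM2 X Y = X * Y := rfl

/-- The derivative of `X ↦ X ^ k` at `A`. -/
noncomputable def powD (k : ℕ) (A : M) : M →L[ℝ] M :=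
  ∑ i ∈ Finset.range k, (mulRightCLM (A ^ (k - 1 - i))).comp (mulLeftCLM (A ^ i))

lemma powD_apply (k : ℕ) (A B : M) :
    powD k A B = ∑ i ∈ Finset.range k, A ^ i * B * A ^ (k - 1 - i) := by
  simp [powD]

lemma hasFDerivAt_pow_matrix (k : ℕ) (A : M) :
    HasFDerivAt (fun X : M => X ^ k) (powD k A) A := by
  induction k with
  | zero =>
    have h0 : powD 0 A = 0 := by rw [powD, Finset.range_zero, Finset.sum_empty]
    have h1 : (fun X : M => X ^ 0) = fun _ => (1 : M) := funext fun X => pow_zero X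
    rw [h0, h1]
    exact hasFDerivAt_const 1 A
  | succ k ih =>
    have hc : HasFDerivAt (fun X : M => mulCLM2 (X ^ k)) (mulCLM2.comp (powD k A)) A :=
      @HasFDerivAt.comp ℝ _ M _ _ M _ _ (M →L[ℝ] M) ContinuousLinearMap.toNormedAddCommGroup
        ContinuousLinearMap.toNormedSpace _ _ A _ _ mulCLM2.hasFDerivAt ih
    have h := hc.clm_apply (hasFDerivAt_id A)
    simp only [id_eq] at h
    have hfun : (fun y : M => mulCLM2 (y ^ k) y) = fun X : M => X ^ (k + 1) := by
      funext X; rw [mulCLM2_apply, ← pow_succ]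
    replace h := h.congr_of_eventuallyEq (f₁ := fun X : M => X ^ (k + 1))
      (Filter.Eventually.of_forall fun X => (congrFun hfun X).symm)
    refine h.congr_fderiv (Eq.symm ?_)
    refine ContinuousLinearMap.ext fun B => ?_
    show powD (k + 1) A B = A ^ k * B + powD k A B * A
    simp only [ContinuousLinearMap.add_apply, ContinuousLinearMap.comp_apply,
      ContinuousLinearMap.coe_id', id_eq, ContinuousLinearMap.flip_apply,
      mulCLM2_apply, powD_apply, Finset.sum_range_succ, Finset.sum_mul]
    rw [add_comm]
    congr 1
    · rw [show k + 1 - 1 - k = 0 from by omega, pow_zero, mul_one]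
    · refine Finset.sum_congr rfl fun i hi => ?_
      have hi' : i < k := Finset.mem_range.1 hi
      rw [show k + 1 - 1 - i = (k - 1 - i) + 1 from by omega, pow_succ, ← mul_assoc]

lemma trace_powD (k : ℕ) (A B : M) :
    (powD (k + 1) A B).trace = ((k : ℝ) + 1) * (A ^ k * B).trace := by
  rw [powD_apply, Matrix.trace_sum]
  have key : ∀ i ∈ Finset.range (k + 1),
      (A ^ i * B * A ^ (k + 1 - 1 - i)).trace = (A ^ k * B).trace := by
    intro i hi
    have hi' : i ≤ k := by have := Finset.mem_range.1 hi; omega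
    have e : k + 1 - 1 - i + i = k := by omega
    rw [Matrix.trace_mul_comm, ← mul_assoc, ← pow_add, e]
  rw [Finset.sum_congr rfl key, Finset.sum_const, Finset.card_range, nsmul_eq_mul]
  push_cast
  ring

/-- derivative of `Pvec` -/
lemma hasFDerivAt_Pvec (m : ℕ) (A : M) :
    HasFDerivAt (Pvec n m)
      (ContinuousLinearMap.pi fun l : Fin m => traceCLM.comp (powD ((l : ℕ) + 1) A)) A := by
  rw [show Pvec n m = fun X (l : Fin m) => traceCLM (X ^ ((l : ℕ) + 1)) from rfl]
  exact hasFDerivAt_pi.2 fun l => traceCLM.hasFDerivAt.comp A (hasFDerivAt_pow_matrix _ A)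

lemma symmetrise_add (x y : M) :
    symmetrise n (x + y) = symmetrise n x + symmetrise n y := by
  unfold symmetrise
  rw [Matrix.transpose_add]
  module

lemma symmetrise_smul (c : ℝ) (x : M) :
    symmetrise n (c • x) = c • symmetrise n x := by
  unfold symmetrise
  rw [Matrix.transpose_smul]
  module

lemma symmetrise_transpose (a : M) : (symmetrise n a)ᵀ = symmetrise n a := by
  unfold symmetrise
  rw [Matrix.transpose_smul, Matrix.transpose_add, Matrix.transpose_transpose, add_comm]

lemma symmetrise_idem (a : M) : symmetrise n (symmetrise n a) = symmetrise n a := by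
  have : symmetrise n (symmetrise n a)
      = ((1 : ℝ) / 2) • (symmetrise n a + (symmetrise n a)ᵀ) := rfl
  rw [this, symmetrise_transpose]
  module

end Aux

/-- Let `ψ` be `C¹` on the open `U ⊆ ℝ^m`,
`F(A) = ψ(P₁(A),…,P_m(A))`, `g` symmetric positive definite, `h` arbitrary and
`Φ(g,h) = F(g⁻¹ * ĥ)` where `ĥ = (h + hᵀ)/2`, assuming `g⁻¹ ĥ` lies in the domain of
`F`. Then the partial Fréchet derivative of `Φ` in `h` satisfies
`(∂Φ/∂h)(g,h)(a) = trace (F'(g⁻¹ĥ) g⁻¹ â) = dF(g⁻¹ĥ)(g⁻¹ â)`; in particular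
`(∂Φ/∂h)(g,h)(a) = (∂Φ/∂h)(g,h)(â)` (the derivative is a symmetric bilinear form). -/
theorem stmt_12 (n m : ℕ) (U : Set (Fin m → ℝ)) (hU : IsOpen U)
    (ψ : (Fin m → ℝ) → ℝ) (hψ : ContDiffOn ℝ 1 ψ U)
    (g h : Matrix (Fin n) (Fin n) ℝ) (hg : g.PosDef) (hgsym : g.IsSymm)
    (hdom : Pvec n m (g⁻¹ * symmetrise n h) ∈ U) :
    ∀ a : Matrix (Fin n) (Fin n) ℝ,
      (fderiv ℝ
          (fun h' : Matrix (Fin n) (Fin n) ℝ => ψ (Pvec n m (g⁻¹ * symmetrise n h'))) h a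
        = (Fprime n m ψ (g⁻¹ * symmetrise n h) * g⁻¹ * symmetrise n a).trace) ∧
      (fderiv ℝ
          (fun h' : Matrix (Fin n) (Fin n) ℝ => ψ (Pvec n m (g⁻¹ * symmetrise n h'))) h a
        = fderiv ℝ (fun X : Matrix (Fin n) (Fin n) ℝ => ψ (Pvec n m X))
            (g⁻¹ * symmetrise n h) (g⁻¹ * symmetrise n a)) ∧
      (fderiv ℝ
          (fun h' : Matrix (Fin n) (Fin n) ℝ => ψ (Pvec n m (g⁻¹ * symmetrise n h'))) h a
        = fderiv ℝ
            (fun h' : Matrix (Fin n) (Fin n) ℝ => ψ (Pvec n m (g⁻¹ * symmetrise n h'))) h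
            (symmetrise n a)) := by
  classical
  -- the inner linear map L : a ↦ g⁻¹ * symmetrise n a
  let Llin : Matrix (Fin n) (Fin n) ℝ →ₗ[ℝ] Matrix (Fin n) (Fin n) ℝ :=
    { toFun := fun a => g⁻¹ * symmetrise n a
      map_add' := by
        intro x y
        show g⁻¹ * symmetrise n (x + y) = g⁻¹ * symmetrise n x + g⁻¹ * symmetrise n y
        rw [symmetrise_add, Matrix.mul_add]
      map_smul' := by
        intro c x
        show g⁻¹ * symmetrise n (c • x) = (RingHom.id ℝ) c • (g⁻¹ * symmetrise n x)
        rw [symmetrise_smul, Matrix.mul_smul, RingHom.id_apply] }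
  let L : Matrix (Fin n) (Fin n) ℝ →L[ℝ] Matrix (Fin n) (Fin n) ℝ :=
    Llin.toContinuousLinearMap
  have L_apply : ∀ a : Matrix (Fin n) (Fin n) ℝ, L a = g⁻¹ * symmetrise n a := fun a => rfl
  set A : Matrix (Fin n) (Fin n) ℝ := g⁻¹ * symmetrise n h with hA
  set DP : Matrix (Fin n) (Fin n) ℝ →L[ℝ] (Fin m → ℝ) :=
    ContinuousLinearMap.pi (fun l : Fin m => traceCLM.comp (powD ((l : ℕ) + 1) A)) with hDP
  have hPvec : HasFDerivAt (Pvec n m) DP A := hasFDerivAt_Pvec m A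
  have hψdiff : DifferentiableAt ℝ ψ (Pvec n m A) :=
    (hψ.differentiableOn one_ne_zero).differentiableAt (hU.mem_nhds hdom)
  set Dψ : (Fin m → ℝ) →L[ℝ] ℝ := fderiv ℝ ψ (Pvec n m A) with hDψ
  have hFouter : HasFDerivAt
      (fun X : Matrix (Fin n) (Fin n) ℝ => ψ (Pvec n m X)) (Dψ.comp DP) A :=
    hψdiff.hasFDerivAt.comp A hPvec
  have hΦ : HasFDerivAt
      (fun h' : Matrix (Fin n) (Fin n) ℝ => ψ (Pvec n m (g⁻¹ * symmetrise n h')))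
      ((Dψ.comp DP).comp L) h :=
    by have := hFouter.comp h (L.hasFDerivAt (x := h)); exact this
  have hfd : fderiv ℝ
      (fun h' : Matrix (Fin n) (Fin n) ℝ => ψ (Pvec n m (g⁻¹ * symmetrise n h'))) h
      = (Dψ.comp DP).comp L := hΦ.fderiv
  -- evaluate Dψ on a vector via the basis
  have Dψ_eval : ∀ v : Fin m → ℝ, Dψ v = ∑ l : Fin m, v l * Dψ (Pi.single l 1) := by
    intro v
    conv_lhs => rw [pi_eq_sum_univ v]
    rw [map_sum]
    refine Finset.sum_congr rfl fun l _ => ?_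
    rw [show (v l • fun j => if l = j then (1:ℝ) else 0) = v l • (Pi.single l 1 : Fin m → ℝ)
      from by congr 1; ext j; simp [Pi.single_apply, eq_comm], Dψ.map_smul, smul_eq_mul]
  -- the key trace identity
  have key : ∀ B : Matrix (Fin n) (Fin n) ℝ,
      (Dψ.comp DP) B = (Fprime n m ψ A * B).trace := by
    intro B
    rw [ContinuousLinearMap.comp_apply, Dψ_eval, Fprime, Finset.sum_mul, Matrix.trace_sum]
    refine Finset.sum_congr rfl fun l _ => ?_
    have hDPl : DP B l = ((l : ℕ) + 1 : ℝ) * (A ^ (l : ℕ) * B).trace := by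
      simp only [hDP, ContinuousLinearMap.pi_apply, ContinuousLinearMap.comp_apply,
        traceCLM_apply]
      exact trace_powD (l : ℕ) A B
    rw [hDPl, Matrix.smul_mul, Matrix.trace_smul, smul_eq_mul]
    ring
  intro a
  refine ⟨?_, ?_, ?_⟩
  · rw [hfd, ContinuousLinearMap.comp_apply, key, L_apply, ← mul_assoc]
  · rw [hfd, hFouter.fderiv, ContinuousLinearMap.comp_apply, L_apply]
  · rw [hfd]
    simp only [ContinuousLinearMap.comp_apply, L_apply, symmetrise_idem]
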